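/- For every 2×2 density matrix ρ₂, the coherence of formation is given by the closed formula C_f(ρ₂) = h((1 + √(1 - C_{l1}(ρ₂)²))/2), where C_{l1}(ρ₂) = 2|⟨0|ρ₂|1⟩| is the l₁-norm of coherence. -/

import Mathlib

open Matrix BigOperators Kronecker ComplexOrder

/-- Base-2 Shannon entropy of a probability vector, with the convention `0 · log 0 = 0`
(automatic since `Real.logb 2 0 = 0`). -/
noncomputable def shannon2 {n : Type*} [Fintype n] (p : n → ℝ) : ℝ :=
  -∑ i, p i * Real.logb 2 (p i)

/-- A density matrix: positive semidefinite with unit trace. -/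
def IsDensityMatrix {n : Type*} [Fintype n] (ρ : Matrix n n ℂ) : Prop :=
  ρ.PosSemidef ∧ ρ.trace = 1

/-- Von Neumann entropy (base 2): Shannon entropy of the eigenvalues. -/
noncomputable def vN {n : Type*} [Fintype n] [DecidableEq n] (ρ : Matrix n n ℂ) : ℝ :=
  if h : ρ.IsHermitian then shannon2 h.eigenvalues else 0

/-- Relative entropy of coherence `C_r(ρ) = S(Δ(ρ)) - S(ρ)`, where `Δ` is the
diagonal part. -/
noncomputable def Cr {n : Type*} [Fintype n] [DecidableEq n] (ρ : Matrix n n ℂ) : ℝ :=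
  vN (Matrix.diagonal ρ.diag) - vN ρ

/-- Application of a channel given by its Kraus operators: `ρ ↦ ∑ i, K i * ρ * (K i)ᴴ`. -/
noncomputable def krausApply {ι m p : Type*} [Fintype ι] [Fintype m] [Fintype p]
    (K : ι → Matrix p m ℂ) (ρ : Matrix m m ℂ) : Matrix p p ℂ :=
  ∑ i, K i * ρ * (K i)ᴴ

/-- Coherence of formation: infimum over finite pure-state decompositions
`ρ = ∑ i, p i • |ψ i⟩⟨ψ i|` of `∑ i, p i * S(Δ(|ψ i⟩⟨ψ i|))`. -/
noncomputable def Cf {n : Type*} [Fintype n] (ρ : Matrix n n ℂ) : ℝ :=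
  sInf { x : ℝ | ∃ (m : ℕ) (p : Fin m → ℝ) (ψ : Fin m → n → ℂ),
    (∀ i, 0 < p i) ∧ (∑ i, p i = 1) ∧ (∀ i, ∑ j, ‖ψ i j‖ ^ 2 = 1) ∧
    ρ = ∑ i, (p i : ℂ) • Matrix.vecMulVec (ψ i) (star (ψ i)) ∧
    x = ∑ i, p i * shannon2 (fun j => ‖ψ i j‖ ^ 2) }

/-- l₁-norm of coherence: sum of the absolute values of the off-diagonal entries. -/
noncomputable def Cl1 {n : Type*} [Fintype n] [DecidableEq n] (ρ : Matrix n n ℂ) : ℝ :=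
  ∑ i, ∑ j, if i ≠ j then ‖ρ i j‖ else 0

/-- Binary entropy function (base 2). -/
noncomputable def binEnt (x : ℝ) : ℝ :=
  -x * Real.logb 2 x - (1 - x) * Real.logb 2 (1 - x)


set_option maxHeartbeats 1000000

section AuxAnalytic
open Real

lemma binEnt_eq (x : ℝ) : binEnt x = Real.binEntropy x / Real.log 2 := by
  unfold binEnt Real.binEntropy Real.logb
  rw [Real.log_inv, Real.log_inv]
  ring

lemma binEnt_one_sub (x : ℝ) : binEnt (1 - x) = binEnt x := by
  unfold binEnt; ring_nf

lemma key_ineq {u : ℝ} (h0 : 0 ≤ u) (h1 : u < 1) :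
    2 * u ≤ Real.log (1 + u) - Real.log (1 - u) := by
  set f : ℝ → ℝ := fun x => Real.log (1 + x) - Real.log (1 - x) - 2 * x with hf
  have hder : ∀ x ∈ Set.Ico (0:ℝ) 1, HasDerivAt f ((1+x)⁻¹ + (1-x)⁻¹ - 2) x := by
    intro x hx
    have h1x : (1:ℝ) + x ≠ 0 := by nlinarith [hx.1]
    have h2x : (1:ℝ) - x ≠ 0 := by nlinarith [hx.2]
    have d1 : HasDerivAt (fun x : ℝ => Real.log (1 + x)) ((1+x)⁻¹) x := by
      simpa using ((hasDerivAt_id x).const_add 1).log h1x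
    have d2 : HasDerivAt (fun x : ℝ => Real.log (1 - x)) (-(1-x)⁻¹) x := by
      have := ((hasDerivAt_id' x).const_sub 1).log h2x
      convert this using 1; field_simp
    have d3 : HasDerivAt (fun x : ℝ => 2 * x) 2 x := by
      simpa using (hasDerivAt_id x).const_mul 2
    have := (d1.sub d2).sub d3
    convert this using 1
    any_goals rfl
    ring
  have hmono : MonotoneOn f (Set.Ico (0:ℝ) 1) := by
    apply monotoneOn_of_deriv_nonneg (convex_Ico 0 1)
    · intro x hx
      exact (hder x hx).differentiableAt.continuousAt.continuousWithinAt
    · intro x hx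
      rw [interior_Ico] at hx
      exact (hder x ⟨le_of_lt hx.1, hx.2⟩).differentiableAt.differentiableWithinAt
    · intro x hx
      rw [interior_Ico] at hx
      rw [(hder x ⟨le_of_lt hx.1, hx.2⟩).deriv]
      have h1x : (0:ℝ) < 1 + x := by linarith [hx.1]
      have h2x : (0:ℝ) < 1 - x := by linarith [hx.2]
      have : (1+x)⁻¹ + (1-x)⁻¹ - 2 = 2*x^2 / ((1+x)*(1-x)) := by
        field_simp; ring
      rw [this]; positivity
  have h00 : f 0 = 0 := by simp [hf]
  have := hmono (Set.mem_Ico.2 ⟨le_refl 0, one_pos⟩) (Set.mem_Ico.2 ⟨h0, h1⟩) h0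
  rw [h00] at this
  have : 0 ≤ Real.log (1 + u) - Real.log (1 - u) - 2*u := this
  linarith

noncomputable def usq (s : ℝ) : ℝ := Real.sqrt (1 - s^2)

noncomputable def Gfun (s : ℝ) : ℝ := binEnt ((1 + Real.sqrt (1 - s^2)) / 2)

noncomputable def Gd (s : ℝ) : ℝ :=
  s * (Real.log (1 + usq s) - Real.log (1 - usq s)) / (2 * usq s) * (Real.log 2)⁻¹

noncomputable def Gdd (s : ℝ) : ℝ :=
  ((Real.log (1 + usq s) - Real.log (1 - usq s)) / 2 - usq s) / (usq s)^3 * (Real.log 2)⁻¹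

section facts
variable {s : ℝ}

lemma usq_pos (h0 : 0 < s) (h1 : s < 1) : 0 < usq s := Real.sqrt_pos.2 (by nlinarith)

lemma usq_lt_one (h0 : 0 < s) (h1 : s < 1) : usq s < 1 := by
  have : (1:ℝ) - s^2 < 1 := by nlinarith
  calc usq s < Real.sqrt 1 := by
        apply Real.sqrt_lt_sqrt (by nlinarith) this
    _ = 1 := Real.sqrt_one

lemma usq_sq {s : ℝ} (hs : -1 ≤ s) (hs' : s ≤ 1) : (usq s)^2 = 1 - s^2 :=
  Real.sq_sqrt (by nlinarith)

lemma hasDerivAt_usq (h0 : 0 < s) (h1 : s < 1) : HasDerivAt usq (-(s / usq s)) s := by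
  have hne : (1:ℝ) - s^2 ≠ 0 := by nlinarith
  have inner : HasDerivAt (fun s : ℝ => 1 - s^2) (-(2*s^1)) s := by
    simpa using (hasDerivAt_pow 2 s).const_sub 1
  have := inner.sqrt hne
  convert this using 1
  · rfl
  rw [pow_one]
  rw [show usq s = Real.sqrt (1 - s^2) from rfl]
  field_simp

lemma hasDerivAt_Gfun (h0 : 0 < s) (h1 : s < 1) : HasDerivAt Gfun (Gd s) s := by
  have hu0 := usq_pos h0 h1
  have hu1 := usq_lt_one h0 h1
  have ht : HasDerivAt (fun s : ℝ => (1 + usq s) / 2) (-(s / usq s) / 2) s :=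
    ((hasDerivAt_usq h0 h1).const_add 1).div_const 2
  set p := (1 + usq s) / 2 with hp
  have hp0 : p ≠ 0 := by positivity
  have hp1 : p ≠ 1 := by
    simp only [hp]; intro h; nlinarith
  have hb := Real.hasDerivAt_binEntropy hp0 hp1
  have hcomp := HasDerivAt.comp s hb ht
  have hG : Gfun = fun s => Real.binEntropy ((1 + usq s) / 2) * (Real.log 2)⁻¹ := by
    funext t
    rw [Gfun, binEnt_eq, div_eq_mul_inv]; rfl
  rw [hG]
  have := hcomp.mul_const (Real.log 2)⁻¹
  convert this using 1
  any_goals rfl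
  have h1p : 1 - p = (1 - usq s) / 2 := by rw [hp]; ring
  rw [Gd, h1p, hp]
  rw [Real.log_div (by linarith) two_ne_zero, Real.log_div (by linarith) two_ne_zero]
  have hune : usq s ≠ 0 := ne_of_gt hu0
  field_simp
  ring

lemma hasDerivAt_Gd (h0 : 0 < s) (h1 : s < 1) : HasDerivAt Gd (Gdd s) s := by
  have hu0 := usq_pos h0 h1
  have hu1 := usq_lt_one h0 h1
  have hu := hasDerivAt_usq h0 h1
  have hune : usq s ≠ 0 := ne_of_gt hu0
  have h1p : (1:ℝ) + usq s ≠ 0 := by linarith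
  have h1m : (1:ℝ) - usq s ≠ 0 := by linarith
  have dL : HasDerivAt (fun s : ℝ => Real.log (1 + usq s) - Real.log (1 - usq s))
      ((-(s / usq s)) / (1 + usq s) - (-(-(s / usq s))) / (1 - usq s)) s := by
    have e1 : HasDerivAt (fun s : ℝ => Real.log (1 + usq s)) ((-(s / usq s)) / (1 + usq s)) s :=
      (hu.const_add 1).log h1p
    have e2 : HasDerivAt (fun s : ℝ => Real.log (1 - usq s)) ((-(-(s / usq s))) / (1 - usq s)) s :=
      (hu.const_sub 1).log h1m
    exact e1.sub e2
  have dnum : HasDerivAt (fun s : ℝ => s * (Real.log (1 + usq s) - Real.log (1 - usq s)))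
      (1 * (Real.log (1 + usq s) - Real.log (1 - usq s)) +
        s * ((-(s / usq s)) / (1 + usq s) - (-(-(s / usq s))) / (1 - usq s))) s :=
    (hasDerivAt_id s).mul dL
  have dden : HasDerivAt (fun s : ℝ => 2 * usq s) (2 * (-(s / usq s))) s := hu.const_mul 2
  have hdenne : 2 * usq s ≠ 0 := by positivity
  have hdiv := dnum.div dden hdenne
  have := hdiv.mul_const (Real.log 2)⁻¹
  have hGd : Gd = fun s : ℝ =>
      (s * (Real.log (1 + usq s) - Real.log (1 - usq s))) / (2 * usq s) * (Real.log 2)⁻¹ := by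
    funext t; rw [Gd]
  rw [hGd]
  convert this using 1
  any_goals rfl
  rw [Gdd]
  have hu2 : (usq s)^2 = 1 - s^2 := usq_sq (by linarith) (le_of_lt h1)
  have hsne : s ≠ 0 := ne_of_gt h0
  set L := Real.log (1 + usq s) - Real.log (1 - usq s) with hL
  set u := usq s with husq
  have key : -(s / u) / (1 + u) - - -(s / u) / (1 - u) = -2 / (s * u) := by
    have hs2 : (1 + u) * (1 - u) = s^2 := by nlinarith [hu2]
    field_simp
    linear_combination 2 * hs2
  rw [key]
  field_simp
  linear_combination (-(Real.log (1+u) - Real.log (1-u))) * hu2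

end facts

lemma Gfun_continuous : Continuous Gfun := by
  have : Gfun = fun s => Real.binEntropy ((1 + Real.sqrt (1 - s^2)) / 2) / Real.log 2 := by
    funext t; rw [Gfun, binEnt_eq]
  rw [this]
  have h1 : Continuous fun s : ℝ => (1 + Real.sqrt (1 - s^2)) / 2 := by fun_prop
  exact (Real.binEntropy_continuous.comp h1).div_const _

lemma Gd_nonneg {s : ℝ} (h0 : 0 < s) (h1 : s < 1) : 0 ≤ Gd s := by
  have hu0 := usq_pos h0 h1
  have hu1 := usq_lt_one h0 h1
  have hL := key_ineq (le_of_lt hu0) hu1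
  rw [Gd]
  have : 0 ≤ Real.log (1 + usq s) - Real.log (1 - usq s) := by linarith [hu0]
  have h2 : (0:ℝ) < Real.log 2 := Real.log_pos one_lt_two
  positivity

lemma Gdd_nonneg {s : ℝ} (h0 : 0 < s) (h1 : s < 1) : 0 ≤ Gdd s := by
  have hu0 := usq_pos h0 h1
  have hu1 := usq_lt_one h0 h1
  have hL := key_ineq (le_of_lt hu0) hu1
  rw [Gdd]
  have : 0 ≤ (Real.log (1 + usq s) - Real.log (1 - usq s)) / 2 - usq s := by linarith
  have h2 : (0:ℝ) < Real.log 2 := Real.log_pos one_lt_two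
  positivity

lemma Gfun_convexOn : ConvexOn ℝ (Set.Icc (0:ℝ) 1) Gfun := by
  apply convexOn_of_hasDerivWithinAt2_nonneg (convex_Icc 0 1) Gfun_continuous.continuousOn
    (f' := Gd) (f'' := Gdd)
  · intro x hx; rw [interior_Icc] at hx
    exact (hasDerivAt_Gfun hx.1 hx.2).hasDerivWithinAt
  · intro x hx; rw [interior_Icc] at hx
    exact (hasDerivAt_Gd hx.1 hx.2).hasDerivWithinAt
  · intro x hx; rw [interior_Icc] at hx
    exact Gdd_nonneg hx.1 hx.2

lemma Gfun_monotoneOn : MonotoneOn Gfun (Set.Icc (0:ℝ) 1) := by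
  apply monotoneOn_of_deriv_nonneg (convex_Icc 0 1) Gfun_continuous.continuousOn
  · intro x hx; rw [interior_Icc] at hx
    exact (hasDerivAt_Gfun hx.1 hx.2).differentiableAt.differentiableWithinAt
  · intro x hx; rw [interior_Icc] at hx
    rw [(hasDerivAt_Gfun hx.1 hx.2).deriv]
    exact Gd_nonneg hx.1 hx.2

lemma shannon2_pure (ψ : Fin 2 → ℂ) (h : ∑ j, ‖ψ j‖ ^ 2 = 1) :
    shannon2 (fun j => ‖ψ j‖ ^ 2) = Gfun (2 * (‖ψ 0‖ * ‖ψ 1‖)) := by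
  have h2 : ‖ψ 0‖^2 + ‖ψ 1‖^2 = 1 := by
    rw [← h, Fin.sum_univ_two]
  set a := ‖ψ 0‖ with ha
  set b := ‖ψ 1‖ with hb
  have ha0 : 0 ≤ a := norm_nonneg _
  have hb0 : 0 ≤ b := norm_nonneg _
  have hsq : (1 : ℝ) - (2*(a*b))^2 = (a^2 - b^2)^2 := by nlinarith
  have hsh : shannon2 (fun j => ‖ψ j‖ ^ 2) = binEnt (a^2) := by
    rw [shannon2, Fin.sum_univ_two, binEnt]
    have : b^2 = 1 - a^2 := by linarith
    rw [← ha, ← hb, this]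
    ring
  rw [hsh, Gfun, hsq, Real.sqrt_sq_eq_abs]
  rcases abs_cases (a^2 - b^2) with ⟨he, _⟩ | ⟨he, hlt⟩
  · rw [he]
    have : (1 + (a^2 - b^2))/2 = a^2 := by nlinarith
    rw [this]
  · rw [he]
    have : (1 + -(a^2 - b^2))/2 = 1 - a^2 := by nlinarith
    rw [this, binEnt_one_sub]

end AuxAnalytic

lemma quad_expand (ρ : Matrix (Fin 2) (Fin 2) ℂ) (a c b : ℝ) (e : ℂ) (τ : ℝ)
    (h00 : ρ 0 0 = (a:ℂ)) (h11 : ρ 1 1 = (c:ℂ)) (he : ρ 0 1 = (b:ℂ) * e)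
    (h10 : ρ 1 0 = star (ρ 0 1)) (hee : e * star e = 1) :
    dotProduct (star ![(τ : ℂ) * e, 1]) (ρ *ᵥ ![(τ : ℂ) * e, 1])
      = ((a * (τ * τ) + (2 * b) * τ + c : ℝ) : ℂ) := by
  simp only [dotProduct, Matrix.mulVec, Fin.sum_univ_two, Pi.star_apply,
    Matrix.cons_val_zero, Matrix.cons_val_one, Matrix.head_cons, star_one, one_mul,
    star_mul', h00, h11, he, h10]
  rw [Complex.star_def] at hee
  simp only [Complex.star_def, _root_.map_mul, Complex.conj_ofReal, Complex.conj_conj]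
  push_cast
  linear_combination (↑τ * ↑τ * (a:ℂ) + 2 * ↑τ * (b:ℂ)) * hee

lemma decomp_entry (ρ : Matrix (Fin 2) (Fin 2) ℂ) (a c b p xp yp : ℝ) (e : ℂ)
    (h00 : ρ 0 0 = (a:ℂ)) (h11 : ρ 1 1 = (c:ℂ)) (he : ρ 0 1 = (b:ℂ) * e)
    (h10 : ρ 1 0 = star (ρ 0 1)) (hee : e * star e = 1)
    (haa : p * (xp*xp) + (1-p) * (yp*yp) = a)
    (hcc : p * (yp*yp) + (1-p) * (xp*xp) = c)
    (hbb : p * (xp*yp) + (1-p) * (yp*xp) = b) :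
    ρ = (p:ℂ) • vecMulVec ![(xp:ℂ), (yp:ℂ)*star e] (star ![(xp:ℂ), (yp:ℂ)*star e])
      + ((1-p : ℝ):ℂ) • vecMulVec ![(yp:ℂ), (xp:ℂ)*star e] (star ![(yp:ℂ), (xp:ℂ)*star e]) := by
  have haC : (p:ℂ) * ((xp:ℂ)*(xp:ℂ)) + (1-(p:ℂ)) * ((yp:ℂ)*(yp:ℂ)) = (a:ℂ) := by
    exact_mod_cast congrArg (fun r : ℝ => (r:ℂ)) haa
  have hcC : (p:ℂ) * ((yp:ℂ)*(yp:ℂ)) + (1-(p:ℂ)) * ((xp:ℂ)*(xp:ℂ)) = (c:ℂ) := by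
    exact_mod_cast congrArg (fun r : ℝ => (r:ℂ)) hcc
  have hbC : (p:ℂ) * ((xp:ℂ)*(yp:ℂ)) + (1-(p:ℂ)) * ((yp:ℂ)*(xp:ℂ)) = (b:ℂ) := by
    exact_mod_cast congrArg (fun r : ℝ => (r:ℂ)) hbb
  rw [Complex.star_def] at hee
  ext i j
  fin_cases i <;> fin_cases j <;>
    simp only [Fin.zero_eta, Fin.mk_one, Matrix.add_apply, Matrix.smul_apply,
      Matrix.vecMulVec_apply, Pi.star_apply, Matrix.cons_val_zero, Matrix.cons_val_one,
      Matrix.head_cons, star_mul', star_star, Complex.conj_ofReal, smul_eq_mul,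
      Complex.star_def, _root_.map_mul, Complex.conj_conj]
  · rw [h00]; push_cast; linear_combination -haC
  · rw [he]; push_cast; linear_combination (-e) * hbC
  · rw [h10, he]
    simp only [Complex.star_def, _root_.map_mul, Complex.conj_ofReal, Complex.conj_conj]
    push_cast
    linear_combination (-(starRingEnd ℂ) e) * hbC
  · rw [h11]; push_cast
    linear_combination -hcC - ((p:ℂ) * ((yp:ℂ)*(yp:ℂ)) + (1-(p:ℂ)) * ((xp:ℂ)*(xp:ℂ))) * hee

lemma Cl1_eq (ρ : Matrix (Fin 2) (Fin 2) ℂ) (hherm : ρ.IsHermitian) :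
    Cl1 ρ = 2 * ‖ρ 0 1‖ := by
  have h10 : ρ 1 0 = star (ρ 0 1) := (hherm.apply 1 0).symm
  rw [Cl1, Fin.sum_univ_two, Fin.sum_univ_two, Fin.sum_univ_two, h10]
  norm_num [norm_star]
  ring

lemma member_lower (ρ : Matrix (Fin 2) (Fin 2) ℂ) (hherm : ρ.IsHermitian)
    {m : ℕ} (p : Fin m → ℝ) (ψ : Fin m → Fin 2 → ℂ)
    (hp : ∀ i, 0 < p i) (hsum : ∑ i, p i = 1) (hunit : ∀ i, ∑ j, ‖ψ i j‖ ^ 2 = 1)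
    (hdec : ρ = ∑ i, (p i : ℂ) • Matrix.vecMulVec (ψ i) (star (ψ i))) :
    Gfun (Cl1 ρ) ≤ ∑ i, p i * shannon2 (fun j => ‖ψ i j‖ ^ 2) := by
  set s : Fin m → ℝ := fun i => 2 * (‖ψ i 0‖ * ‖ψ i 1‖) with hs
  have hs_mem : ∀ i, s i ∈ Set.Icc (0:ℝ) 1 := by
    intro i
    have h2 : ‖ψ i 0‖^2 + ‖ψ i 1‖^2 = 1 := by
      rw [← hunit i, Fin.sum_univ_two]
    constructor
    · show (0:ℝ) ≤ 2 * (‖ψ i 0‖ * ‖ψ i 1‖); positivity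
    · show 2 * (‖ψ i 0‖ * ‖ψ i 1‖) ≤ 1
      nlinarith [norm_nonneg (ψ i 0), norm_nonneg (ψ i 1), sq_nonneg (‖ψ i 0‖ - ‖ψ i 1‖)]
  have hval : ∑ i, p i * shannon2 (fun j => ‖ψ i j‖ ^ 2) = ∑ i, p i * Gfun (s i) := by
    apply Finset.sum_congr rfl
    intro i _
    rw [shannon2_pure (ψ i) (hunit i)]
  have hentry : ρ 0 1 = ∑ i, (p i : ℂ) * (ψ i 0 * star (ψ i 1)) := by
    rw [hdec]
    simp [Matrix.sum_apply, Matrix.vecMulVec_apply]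
  have hnorm : ‖ρ 0 1‖ ≤ ∑ i, p i * (‖ψ i 0‖ * ‖ψ i 1‖) := by
    rw [hentry]
    refine (norm_sum_le _ _).trans ?_
    apply Finset.sum_le_sum
    intro i _
    rw [norm_mul, norm_mul, norm_star, Complex.norm_real,
      Real.norm_of_nonneg (hp i).le]
  have hCl1 : Cl1 ρ = 2 * ‖ρ 0 1‖ := Cl1_eq ρ hherm
  have hle : Cl1 ρ ≤ ∑ i, p i * s i := by
    rw [hCl1, hs]
    calc 2 * ‖ρ 0 1‖ ≤ 2 * ∑ i, p i * (‖ψ i 0‖ * ‖ψ i 1‖) := by linarith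
    _ = ∑ i, p i * (2 * (‖ψ i 0‖ * ‖ψ i 1‖)) := by
        rw [Finset.mul_sum]; apply Finset.sum_congr rfl; intro i _; ring
  have hsum_mem : (∑ i, p i * s i) ∈ Set.Icc (0:ℝ) 1 := by
    constructor
    · apply Finset.sum_nonneg; intro i _; exact mul_nonneg (hp i).le (hs_mem i).1
    · calc ∑ i, p i * s i ≤ ∑ i, p i * 1 := by
            apply Finset.sum_le_sum; intro i _
            exact mul_le_mul_of_nonneg_left (hs_mem i).2 (hp i).le
        _ = 1 := by simp [hsum]
  have hCl1_mem : Cl1 ρ ∈ Set.Icc (0:ℝ) 1 := by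
    constructor
    · rw [hCl1]; positivity
    · exact hle.trans hsum_mem.2
  have jensen : Gfun (∑ i, p i • s i) ≤ ∑ i, p i * Gfun (s i) := by
    apply Gfun_convexOn.map_sum_le (fun i _ => (hp i).le) hsum (fun i _ => hs_mem i)
  have hmono := Gfun_monotoneOn hCl1_mem (by simpa [smul_eq_mul] using hsum_mem) hle
  rw [hval]
  refine le_trans ?_ jensen
  simpa [smul_eq_mul] using hmono

-- The set in the definition of Cf
def CfSet (ρ : Matrix (Fin 2) (Fin 2) ℂ) : Set ℝ :=
  { x : ℝ | ∃ (m : ℕ) (p : Fin m → ℝ) (ψ : Fin m → Fin 2 → ℂ),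
    (∀ i, 0 < p i) ∧ (∑ i, p i = 1) ∧ (∀ i, ∑ j, ‖ψ i j‖ ^ 2 = 1) ∧
    ρ = ∑ i, (p i : ℂ) • Matrix.vecMulVec (ψ i) (star (ψ i)) ∧
    x = ∑ i, p i * shannon2 (fun j => ‖ψ i j‖ ^ 2) }

lemma member_upper (ρ : Matrix (Fin 2) (Fin 2) ℂ) (hρ : IsDensityMatrix ρ) :
    Gfun (Cl1 ρ) ∈ CfSet ρ := by
  obtain ⟨hpsd, htr⟩ := hρ
  have hherm := hpsd.1
  set a := (ρ 0 0).re with ha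
  set c := (ρ 1 1).re with hc
  have h00 : ρ 0 0 = (a : ℂ) := by
    have := hherm.coe_re_apply_self 0
    exact this.symm
  have h11 : ρ 1 1 = (c : ℂ) := (hherm.coe_re_apply_self 1).symm
  have htr2 : a + c = 1 := by
    have : ρ.trace = ρ 0 0 + ρ 1 1 := by
      rw [Matrix.trace, Fin.sum_univ_two]; rfl
    rw [this, h00, h11] at htr
    exact_mod_cast htr
  set b := ‖ρ 0 1‖ with hb
  have hb0 : 0 ≤ b := norm_nonneg _
  have h10 : ρ 1 0 = star (ρ 0 1) := (hherm.apply 1 0).symm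
  -- phase
  set e : ℂ := if ρ 0 1 = 0 then 1 else ρ 0 1 / (b : ℂ) with he_def
  have he_norm : ‖e‖ = 1 := by
    rw [he_def]
    split_ifs with h
    · simp
    · rw [norm_div, Complex.norm_real, Real.norm_of_nonneg hb0]
      exact div_self (norm_ne_zero_iff.2 h)
  have he : ρ 0 1 = (b : ℂ) * e := by
    rw [he_def]
    split_ifs with h
    · simp [h, hb]
    · have hbne : (b : ℂ) ≠ 0 := Complex.ofReal_ne_zero.2 (norm_ne_zero_iff.2 h)
      field_simp
  have hee : e * star e = 1 := by
    rw [Complex.star_def, Complex.mul_conj]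
    norm_cast
    rw [Complex.normSq_eq_norm_sq, he_norm]
    norm_num
  -- quadratic form nonneg
  have hq : ∀ τ : ℝ, 0 ≤ a * (τ * τ) + (2 * b) * τ + c := by
    intro τ
    have hv := hpsd.dotProduct_mulVec_nonneg ![(τ : ℂ) * e, 1]
    have hexp := quad_expand ρ a c b e τ h00 h11 he h10 hee
    rw [hexp] at hv
    exact Complex.zero_le_real.mp hv
  have ha0 : 0 ≤ a := by
    have hv := hpsd.dotProduct_mulVec_nonneg ![(1:ℂ), 0]
    have hexp : dotProduct (star ![(1:ℂ), 0]) (ρ *ᵥ ![(1:ℂ), 0]) = ((a : ℝ) : ℂ) := by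
      simp [dotProduct, Matrix.mulVec, Fin.sum_univ_two, h00]
    rw [hexp] at hv
    exact Complex.zero_le_real.mp hv
  have hb2 : b ^ 2 ≤ a * c := by
    have := discrim_le_zero hq
    rw [discrim] at this
    nlinarith
  have hc0 : 0 ≤ c := by nlinarith
  have hb1 : 2 * b ≤ 1 := by nlinarith [sq_nonneg (a - c), hb0]
  -- parameters
  set t := Real.sqrt (1 - (2 * b) ^ 2) with ht_def
  have ht0 : 0 ≤ t := Real.sqrt_nonneg _
  have ht2 : t ^ 2 = 1 - (2 * b) ^ 2 := Real.sq_sqrt (by nlinarith)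
  have ht1 : t ≤ 1 := by nlinarith
  have habs : |2 * a - 1| ≤ t := by
    have h1 : (2 * a - 1) ^ 2 ≤ t ^ 2 := by nlinarith
    nlinarith [abs_nonneg (2 * a - 1), sq_abs (2 * a - 1)]
  set xp := Real.sqrt ((1 + t) / 2) with hxp_def
  set yp := Real.sqrt ((1 - t) / 2) with hyp_def
  have hxp0 : 0 ≤ xp := Real.sqrt_nonneg _
  have hyp0 : 0 ≤ yp := Real.sqrt_nonneg _
  have hxp2 : xp ^ 2 = (1 + t) / 2 := Real.sq_sqrt (by linarith)
  have hyp2 : yp ^ 2 = (1 - t) / 2 := Real.sq_sqrt (by linarith)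
  have hxyp : xp * yp = b := by
    rw [hxp_def, hyp_def, ← Real.sqrt_mul (by linarith)]
    have : (1 + t) / 2 * ((1 - t) / 2) = b ^ 2 := by nlinarith
    rw [this, Real.sqrt_sq hb0]
  set ψp : Fin 2 → ℂ := ![(xp : ℂ), (yp : ℂ) * star e] with hψp
  set ψm : Fin 2 → ℂ := ![(yp : ℂ), (xp : ℂ) * star e] with hψm
  have hstar_e_norm : ‖star e‖ = 1 := by rw [norm_star, he_norm]
  have hnψp0 : ‖ψp 0‖ = xp := by
    rw [hψp]
    show ‖((xp:ℝ) : ℂ)‖ = xp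
    rw [Complex.norm_real, Real.norm_of_nonneg hxp0]
  have hnψp1 : ‖ψp 1‖ = yp := by
    rw [hψp]
    show ‖((yp:ℝ) : ℂ) * star e‖ = yp
    rw [norm_mul, hstar_e_norm, Complex.norm_real, Real.norm_of_nonneg hyp0, mul_one]
  have hnψm0 : ‖ψm 0‖ = yp := by
    rw [hψm]
    show ‖((yp:ℝ) : ℂ)‖ = yp
    rw [Complex.norm_real, Real.norm_of_nonneg hyp0]
  have hnψm1 : ‖ψm 1‖ = xp := by
    rw [hψm]
    show ‖((xp:ℝ) : ℂ) * star e‖ = xp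
    rw [norm_mul, hstar_e_norm, Complex.norm_real, Real.norm_of_nonneg hxp0, mul_one]
  have hψp_unit : ∑ j, ‖ψp j‖ ^ 2 = 1 := by
    rw [Fin.sum_univ_two, hnψp0, hnψp1]; nlinarith
  have hψm_unit : ∑ j, ‖ψm j‖ ^ 2 = 1 := by
    rw [Fin.sum_univ_two, hnψm0, hnψm1]; nlinarith
  -- weight
  set p := if t = 0 then (1:ℝ)/2 else (a - (1 - t)/2) / t with hp_def
  have hp_cases : (0 ≤ p ∧ p ≤ 1) ∧ p * ((1 + t)/2) + (1 - p) * ((1 - t)/2) = a := by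
    rw [hp_def]
    split_ifs with h
    · have : a = 1/2 := by
        rw [h] at habs
        have := abs_nonneg (2 * a - 1)
        have h2 : |2 * a - 1| = 0 := le_antisymm habs this
        have := abs_eq_zero.mp h2
        linarith
      rw [h, this]; norm_num
    · have htpos : 0 < t := lt_of_le_of_ne ht0 (Ne.symm h)
      have hub : a - (1 - t)/2 ≤ t := by
        cases abs_le.mp habs with
        | intro h1 h2 => linarith
      have hlb : 0 ≤ a - (1 - t)/2 := by
        cases abs_le.mp habs with
        | intro h1 h2 => linarith
      refine ⟨⟨div_nonneg hlb ht0, (div_le_one htpos).2 hub⟩, ?_⟩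
      field_simp
      ring
  obtain ⟨⟨hp0, hp1⟩, hpa⟩ := hp_cases
  have hCl1 : Cl1 ρ = 2 * b := Cl1_eq ρ hherm
  have hshp : shannon2 (fun j => ‖ψp j‖ ^ 2) = Gfun (Cl1 ρ) := by
    rw [shannon2_pure ψp hψp_unit, hnψp0, hnψp1, hxyp, hCl1]
  have hshm : shannon2 (fun j => ‖ψm j‖ ^ 2) = Gfun (Cl1 ρ) := by
    rw [shannon2_pure ψm hψm_unit, hnψm0, hnψm1, hCl1]
    rw [show yp * xp = b by rw [mul_comm, hxyp]]
  -- the decomposition identity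
  have hxx : xp * xp = (1 + t)/2 := by rw [← sq]; exact hxp2
  have hyy : yp * yp = (1 - t)/2 := by rw [← sq]; exact hyp2
  have haa' : p * (xp*xp) + (1-p) * (yp*yp) = a := by
    rw [hxx, hyy]; linarith [hpa]
  have hcc' : p * (yp*yp) + (1-p) * (xp*xp) = c := by
    rw [hxx, hyy]; linarith [hpa, htr2]
  have hbb' : p * (xp*yp) + (1-p) * (yp*xp) = b := by
    rw [mul_comm yp xp, hxyp]; ring
  have hdecomp : ρ = (p:ℂ) • Matrix.vecMulVec ψp (star ψp)
      + ((1-p : ℝ):ℂ) • Matrix.vecMulVec ψm (star ψm) := by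
    rw [hψp, hψm]
    exact decomp_entry ρ a c b p xp yp e h00 h11 he h10 hee haa' hcc' hbb'
  -- case analysis on p
  rcases eq_or_lt_of_le hp0 with hpz | hppos
  · -- p = 0 : single state ψm
    refine ⟨1, ![1], ![ψm], ?_, ?_, ?_, ?_, ?_⟩
    · intro i; fin_cases i; norm_num
    · simp
    · intro i; fin_cases i; simpa using hψm_unit
    · rw [Fin.sum_univ_one]
      simp only [Matrix.cons_val_zero]
      rw [hdecomp, ← hpz]
      push_cast
      simp
    · rw [Fin.sum_univ_one]
      simp only [Matrix.cons_val_zero]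
      rw [hshm]
      norm_num
  rcases eq_or_lt_of_le hp1 with hpo | hplt
  · -- p = 1 : single state ψp
    refine ⟨1, ![1], ![ψp], ?_, ?_, ?_, ?_, ?_⟩
    · intro i; fin_cases i; norm_num
    · simp
    · intro i; fin_cases i; simpa using hψp_unit
    · rw [Fin.sum_univ_one]
      simp only [Matrix.cons_val_zero]
      rw [hdecomp, hpo]
      push_cast
      simp
    · rw [Fin.sum_univ_one]
      simp only [Matrix.cons_val_zero]
      rw [hshp]
      norm_num
  · -- 0 < p < 1 : two states
    refine ⟨2, ![p, 1-p], ![ψp, ψm], ?_, ?_, ?_, ?_, ?_⟩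
    · intro i; fin_cases i
      · simpa using hppos
      · show (0:ℝ) < ![p, 1-p] 1
        simp only [Matrix.cons_val_one, Matrix.head_cons, Matrix.cons_val_zero]; linarith
    · rw [Fin.sum_univ_two]; simp
    · intro i; fin_cases i
      · simpa using hψp_unit
      · simpa using hψm_unit
    · rw [Fin.sum_univ_two]
      simpa using hdecomp
    · rw [Fin.sum_univ_two]
      simp only [Matrix.cons_val_zero, Matrix.cons_val_one, Matrix.head_cons]
      rw [hshp, hshm]
      ring

-- final assembly test

/-- **Lemma 2.** Closed formula for the coherence of formation of a qubit state:
`C_f(ρ₂) = h((1 + √(1 - C_{l₁}(ρ₂)²))/2)`. -/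
theorem Cf_qubit_closed_formula (ρ : Matrix (Fin 2) (Fin 2) ℂ)
    (hρ : IsDensityMatrix ρ) :
    Cf ρ = binEnt ((1 + Real.sqrt (1 - Cl1 ρ ^ 2)) / 2) := by
  have hmem := member_upper ρ hρ
  have hlow : ∀ x ∈ CfSet ρ, Gfun (Cl1 ρ) ≤ x := by
    rintro x ⟨m, p, ψ, h1, h2, h3, h4, h5⟩
    rw [h5]
    exact member_lower ρ hρ.1.1 p ψ h1 h2 h3 h4
  have hCf : Cf ρ = sInf (CfSet ρ) := rfl
  rw [hCf]
  have heq : sInf (CfSet ρ) = Gfun (Cl1 ρ) :=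
    le_antisymm (csInf_le ⟨Gfun (Cl1 ρ), fun x hx => hlow x hx⟩ hmem)
      (le_csInf ⟨_, hmem⟩ hlow)
  rw [heq]
  rfl
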